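/- Let A₀, A₁ be bounded operators on a Banach space. The function S(t;τ) = ∑_{k=0}^∞ ∑_{l=0}^{k} Q_{k+1}(lτ) (t − lτ)₊ᵏ / k! (with Q defined by the non-commutative recursion Q_{k+1}(0)=A₀ᵏ, Q_{k+1}(lτ) = ∑_{m=l}^k A₀^{k−m} A₁ Q_m((l−1)τ)) satisfies ‖S(t;τ) − I‖ ≤ exp((‖A₀‖+‖A₁‖)t) − 1 for all t ≥ 0; in particular S(t;τ) → I in operator norm as t → 0⁺. -/

import Mathlib

open Finset

lemma aux_norm_pow {X : Type*} [NormedAddCommGroup X] [NormedSpace ℝ X]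
    (A : X →L[ℝ] X) (n : ℕ) : ‖A ^ n‖ ≤ ‖A‖ ^ n := by
  induction n with
  | zero =>
    simp only [pow_zero]
    rw [ContinuousLinearMap.one_def]
    exact ContinuousLinearMap.norm_id_le
  | succ n ih =>
    rw [pow_succ, pow_succ]
    calc ‖A ^ n * A‖ ≤ ‖A ^ n‖ * ‖A‖ := norm_mul_le _ _
      _ ≤ ‖A‖ ^ n * ‖A‖ := by
        exact mul_le_mul_of_nonneg_right ih (norm_nonneg _)

lemma aux_sum_choose (l k : ℕ) (h : l + 1 ≤ k) :
    ∑ m ∈ Icc (l + 1) k, (m - 1).choose l = k.choose (l + 1) := by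
  induction k with
  | zero => omega
  | succ k ih =>
    rcases Nat.lt_or_ge l k with hlk | hlk
    · rw [Finset.sum_Icc_succ_top (by omega : l + 1 ≤ k + 1), ih (by omega)]
      have : (k + 1 - 1).choose l = k.choose l := rfl
      rw [this, Nat.choose_succ_succ']
      omega
    · have hl : l = k := by omega
      subst hl
      rw [Finset.Icc_self]
      simp

set_option maxHeartbeats 1000000 in
theorem stmt_12 {X : Type*} [NormedAddCommGroup X] [NormedSpace ℝ X] [CompleteSpace X]
    (A₀ A₁ : X →L[ℝ] X) (τ : ℝ) (hτ : 0 < τ)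
    (Q : ℕ → ℤ → (X →L[ℝ] X))
    (h0 : ∀ l : ℤ, Q 0 l = 0)
    (hneg : ∀ k : ℕ, Q k (-1) = 0)
    (hbase : ∀ k : ℕ, Q (k + 1) 0 = A₀ ^ k)
    (hrec : ∀ (k l : ℕ), 1 ≤ l →
      Q (k + 1) l = ∑ m ∈ Finset.Icc l k, A₀ ^ (k - m) * A₁ * Q m ((l : ℤ) - 1))
    (S : ℝ → (X →L[ℝ] X))
    (hS : ∀ t : ℝ, S t = ∑' k : ℕ, ∑ l ∈ Finset.range (k + 1),
      ((max (t - l * τ) 0) ^ k / k.factorial : ℝ) • Q (k + 1) l) :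
    (∀ t : ℝ, 0 ≤ t → ‖S t - 1‖ ≤ Real.exp ((‖A₀‖ + ‖A₁‖) * t) - 1) ∧
    Filter.Tendsto S (nhdsWithin 0 (Set.Ioi 0)) (nhds 1) := by
  set a : ℝ := ‖A₀‖ with ha
  set b : ℝ := ‖A₁‖ with hb
  have ha0 : 0 ≤ a := norm_nonneg _
  have hb0 : 0 ≤ b := norm_nonneg _
  -- key bound on Q
  have Qb : ∀ l k : ℕ, l ≤ k → ‖Q (k + 1) l‖ ≤ (k.choose l : ℝ) * a ^ (k - l) * b ^ l := by
    intro l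
    induction l with
    | zero =>
      intro k _
      rw [Int.natCast_zero, hbase k]
      simpa using aux_norm_pow A₀ k
    | succ l ih =>
      intro k hk
      have hcast : ((l + 1 : ℕ) : ℤ) - 1 = (l : ℤ) := by push_cast; ring
      rw [hrec k (l + 1) (by omega)]
      simp only [hcast]
      calc ‖∑ m ∈ Icc (l + 1) k, A₀ ^ (k - m) * A₁ * Q m (l : ℤ)‖
          ≤ ∑ m ∈ Icc (l + 1) k, ‖A₀ ^ (k - m) * A₁ * Q m (l : ℤ)‖ := norm_sum_le _ _
        _ ≤ ∑ m ∈ Icc (l + 1) k,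
            ((m - 1).choose l : ℝ) * (a ^ (k - (l + 1)) * b ^ (l + 1)) := by
            refine Finset.sum_le_sum ?_
            intro m hm
            simp only [mem_Icc] at hm
            have hm1 : m = (m - 1) + 1 := by omega
            have hQ : ‖Q m (l : ℤ)‖ ≤ ((m - 1).choose l : ℝ) * a ^ (m - 1 - l) * b ^ l := by
              rw [hm1]; exact ih (m - 1) (by omega)
            calc ‖A₀ ^ (k - m) * A₁ * Q m (l : ℤ)‖
                ≤ ‖A₀ ^ (k - m) * A₁‖ * ‖Q m (l : ℤ)‖ := norm_mul_le _ _
              _ ≤ ‖A₀ ^ (k - m)‖ * ‖A₁‖ * ‖Q m (l : ℤ)‖ := by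
                  exact mul_le_mul_of_nonneg_right (norm_mul_le _ _) (norm_nonneg _)
              _ ≤ a ^ (k - m) * b * (((m - 1).choose l : ℝ) * a ^ (m - 1 - l) * b ^ l) := by
                  refine mul_le_mul ?_ hQ (norm_nonneg _) (by positivity)
                  exact mul_le_mul_of_nonneg_right (aux_norm_pow A₀ _) hb0
              _ = ((m - 1).choose l : ℝ) * (a ^ (k - m) * a ^ (m - 1 - l) * (b ^ l * b)) := by
                  ring
              _ = ((m - 1).choose l : ℝ) * (a ^ (k - (l + 1)) * b ^ (l + 1)) := by
                  rw [← pow_add, ← pow_succ]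
                  have he : k - m + (m - 1 - l) = k - (l + 1) := by omega
                  rw [he]
        _ = (∑ m ∈ Icc (l + 1) k, ((m - 1).choose l : ℝ)) *
              (a ^ (k - (l + 1)) * b ^ (l + 1)) := by rw [Finset.sum_mul]
        _ = (k.choose (l + 1) : ℝ) * a ^ (k - (l + 1)) * b ^ (l + 1) := by
            rw [← Nat.cast_sum, aux_sum_choose l k hk]
            ring
  -- termwise bound for S
  have gbound : ∀ t : ℝ, 0 ≤ t → ∀ k : ℕ,
      ‖∑ l ∈ range (k + 1), ((max (t - l * τ) 0) ^ k / k.factorial : ℝ) • Q (k + 1) l‖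
        ≤ ((a + b) * t) ^ k / k.factorial := by
    intro t ht k
    calc ‖∑ l ∈ range (k + 1), ((max (t - l * τ) 0) ^ k / k.factorial : ℝ) • Q (k + 1) l‖
        ≤ ∑ l ∈ range (k + 1), ‖((max (t - l * τ) 0) ^ k / k.factorial : ℝ) • Q (k + 1) l‖ :=
          norm_sum_le _ _
      _ ≤ ∑ l ∈ range (k + 1),
            t ^ k / k.factorial * ((k.choose l : ℝ) * a ^ (k - l) * b ^ l) := by
          refine Finset.sum_le_sum ?_
          intro l hl
          simp only [mem_range] at hl
          have hmaxle : max (t - l * τ) 0 ≤ t := by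
            have : (0 : ℝ) ≤ (l : ℝ) * τ := by positivity
            apply max_le (by linarith) ht
          have hpow : (max (t - l * τ) 0) ^ k ≤ t ^ k :=
            pow_le_pow_left₀ (le_max_right _ _) hmaxle k
          rw [norm_smul ((max (t - l * τ) 0) ^ k / (k.factorial : ℝ)) (Q (k + 1) (l : ℤ)),
            Real.norm_eq_abs]
          have habs : |(max (t - l * τ) 0) ^ k / k.factorial| ≤ t ^ k / k.factorial := by
            rw [abs_of_nonneg (by positivity)]
            exact div_le_div_of_nonneg_right hpow (by positivity)
          refine mul_le_mul habs (Qb l k (by omega)) (norm_nonneg _) (by positivity)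
      _ = t ^ k / k.factorial * ∑ l ∈ range (k + 1), (k.choose l : ℝ) * a ^ (k - l) * b ^ l := by
          rw [Finset.mul_sum]
      _ = ((a + b) * t) ^ k / k.factorial := by
          have : ∑ l ∈ range (k + 1), (k.choose l : ℝ) * a ^ (k - l) * b ^ l = (a + b) ^ k := by
            rw [add_comm a b, add_pow]
            refine Finset.sum_congr rfl ?_
            intro l hl
            ring
          rw [this, mul_pow]
          ring
  have hfsum : ∀ t : ℝ, Summable (fun k : ℕ => ((a + b) * t) ^ k / k.factorial) := fun t =>
    Real.summable_pow_div_factorial _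
  have hgsum : ∀ t : ℝ, 0 ≤ t → Summable (fun k : ℕ =>
      ∑ l ∈ range (k + 1), ((max (t - l * τ) 0) ^ k / k.factorial : ℝ) • Q (k + 1) l) := by
    intro t ht
    exact Summable.of_norm_bounded (hfsum t) (gbound t ht)
  -- g 0 = 1
  have hg0 : ∀ t : ℝ,
      (∑ l ∈ range (0 + 1), ((max (t - l * τ) 0) ^ 0 / (0 : ℕ).factorial : ℝ) • Q (0 + 1) l)
        = 1 := by
    intro t
    simp [hbase 0]
  -- main estimate
  have main : ∀ t : ℝ, 0 ≤ t → ‖S t - 1‖ ≤ Real.exp ((a + b) * t) - 1 := by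
    intro t ht
    obtain ⟨g, hgdef⟩ : ∃ g : ℕ → (X →L[ℝ] X), ∀ k, g k =
        ∑ l ∈ range (k + 1), ((max (t - l * τ) 0) ^ k / k.factorial : ℝ) • Q (k + 1) l :=
      ⟨_, fun k => rfl⟩
    have hgb : ∀ k, ‖g k‖ ≤ ((a + b) * t) ^ k / k.factorial := by
      intro k; rw [hgdef]; exact gbound t ht k
    have hgs : Summable g := Summable.of_norm_bounded (hfsum t) hgb
    have hgnorm : Summable (fun k => ‖g k‖) :=
      Summable.of_nonneg_of_le (fun _ => norm_nonneg _) hgb (hfsum t)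
    have hshift : Summable (fun k => g (k + 1)) := by
      exact (summable_nat_add_iff 1).mpr hgs
    have hshiftnorm : Summable (fun k => ‖g (k + 1)‖) := by
      exact (summable_nat_add_iff 1).mpr hgnorm
    have hfshift : Summable (fun k : ℕ => ((a + b) * t) ^ (k + 1) / (k + 1).factorial) := by
      exact (summable_nat_add_iff 1).mpr (hfsum t)
    have hSt : S t = ∑' k, g k := by
      rw [hS t]; exact (tsum_congr fun k => (hgdef k).symm)
    have hsplit : ∑' k, g k = g 0 + ∑' k, g (k + 1) := Summable.tsum_eq_zero_add hgs
    have hg0' : g 0 = 1 := by rw [hgdef]; exact hg0 t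
    have h1 : S t - 1 = ∑' k, g (k + 1) := by
      rw [hSt, hsplit, hg0']; abel
    rw [h1]
    calc ‖∑' k, g (k + 1)‖ ≤ ∑' k, ‖g (k + 1)‖ := norm_tsum_le_tsum_norm hshiftnorm
      _ ≤ ∑' k : ℕ, ((a + b) * t) ^ (k + 1) / (k + 1).factorial := by
          exact Summable.tsum_le_tsum (fun k => hgb (k + 1)) hshiftnorm hfshift
      _ = Real.exp ((a + b) * t) - 1 := by
          have hexp : Real.exp ((a + b) * t)
              = ∑' k : ℕ, ((a + b) * t) ^ k / k.factorial := by
            rw [Real.exp_eq_exp_ℝ, NormedSpace.exp_eq_tsum_div]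
          have := Summable.tsum_eq_zero_add (hfsum t)
          rw [hexp, this]
          simp
  constructor
  · exact main
  · rw [tendsto_iff_norm_sub_tendsto_zero]
    have hb0' : Filter.Tendsto (fun t : ℝ => Real.exp ((a + b) * t) - 1)
        (nhdsWithin 0 (Set.Ioi 0)) (nhds 0) := by
      have hc : Continuous (fun t : ℝ => Real.exp ((a + b) * t) - 1) := by
        continuity
      have := hc.tendsto 0
      simp only [mul_zero, Real.exp_zero, sub_self] at this
      exact this.mono_left nhdsWithin_le_nhds
    refine squeeze_zero' ?_ ?_ hb0'
    · filter_upwards with t using norm_nonneg _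
    · filter_upwards [self_mem_nhdsWithin] with t ht
      exact main t (le_of_lt ht)
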